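/- Let F be a finite field with q elements, q ≡ 3 (mod 4), and let AGM denote the map sending an admissible pair (a, b) to the admissible pair ((a+b)/2, b′), where b′ is the unique element with b′² = ab and (a+b)b′/2 a nonzero square. Then for admissible pairs (a, b) and (c, d), one has AGM(a, b) = AGM(c, d) if and only if (c, d) = (a, b) or (c, d) = (b, a). In particular, every admissible pair in the image of AGM has exactly two preimages. -/

import Mathlib

/-- A pair `(a, b)` of elements of a field is admissible if `a ≠ 0`, `b ≠ 0`, `a ≠ b`,
`a ≠ -b`, and `a*b` is a square. -/
def IsAdmissible {F : Type*} [Field F] (a b : F) : Prop :=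
  a ≠ 0 ∧ b ≠ 0 ∧ a ≠ b ∧ a ≠ -b ∧ IsSquare (a * b)

/-- The type of admissible pairs in `F`. -/
def AdmPair (F : Type*) [Field F] : Type _ := {v : F × F // IsAdmissible v.1 v.2}

/-- `agm` is the AGM map on admissible pairs: it sends `(a, b)` to `((a + b)/2, b')` where `b'`
is the unique element with `b'^2 = a*b` and `((a + b)/2) * b'` a nonzero square. -/
def IsAGMMap {F : Type*} [Field F] (agm : AdmPair F → AdmPair F) : Prop :=
  ∀ v : AdmPair F,
    (agm v).1.1 = (v.1.1 + v.1.2) / 2 ∧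
    (agm v).1.2 ^ 2 = v.1.1 * v.1.2 ∧
    (agm v).1.1 * (agm v).1.2 ≠ 0 ∧
    IsSquare ((agm v).1.1 * (agm v).1.2)

/-- For a finite field with `q ≡ 3 (mod 4)` elements, `AGM(a, b) = AGM(c, d)` iff
`(c, d) = (a, b)` or `(c, d) = (b, a)`; in particular every admissible pair in the image of
the AGM map has exactly two preimages. -/
theorem agm_eq_agm_iff_eq_or_swap
    (F : Type*) [Field F] [Fintype F] (hq : Fintype.card F % 4 = 3)
    (agm : AdmPair F → AdmPair F) (hagm : IsAGMMap agm) :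
    (∀ v w : AdmPair F, agm v = agm w ↔ (w.1 = v.1 ∨ w.1 = (v.1.2, v.1.1))) ∧
    (∀ u : AdmPair F, u ∈ Set.range agm → Set.ncard {v : AdmPair F | agm v = u} = 2) := by
  have hns : ¬ IsSquare (-1 : F) := by
    rw [FiniteField.isSquare_neg_one_iff]
    simp [hq]
  have h2 : (2 : F) ≠ 0 := by
    intro h
    apply hns
    have : (-1 : F) = 1 := by linear_combination -h
    rw [this]; exact IsSquare.one
  -- if x ≠ 0 is a square, -x is not
  have hkeyns : ∀ x : F, x ≠ 0 → IsSquare x → ¬ IsSquare (-x) := by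
    intro x hx hsq hsq'
    apply hns
    have : (-1 : F) = (-x) * x⁻¹ := by field_simp
    rw [this]
    exact hsq'.mul (hsq.inv)
  -- key: equal sum and product of inputs give equal agm values
  have key : ∀ v w : AdmPair F, v.1.1 + v.1.2 = w.1.1 + w.1.2 →
      v.1.1 * v.1.2 = w.1.1 * w.1.2 → agm v = agm w := by
    intro v w hs hp
    obtain ⟨hv1, hv2, hv3, hv4⟩ := hagm v
    obtain ⟨hw1, hw2, hw3, hw4⟩ := hagm w
    have hfst : (agm v).1.1 = (agm w).1.1 := by rw [hv1, hw1, hs]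
    have hsq : ((agm v).1.2 - (agm w).1.2) * ((agm v).1.2 + (agm w).1.2) = 0 := by
      have : (agm v).1.2 ^ 2 = (agm w).1.2 ^ 2 := by rw [hv2, hw2, hp]
      ring_nf
      linear_combination this
    rcases mul_eq_zero.1 hsq with h | h
    · have hsnd : (agm v).1.2 = (agm w).1.2 := sub_eq_zero.1 h
      exact Subtype.ext (Prod.ext hfst hsnd)
    · exfalso
      have hneg : (agm v).1.2 = -(agm w).1.2 := by linear_combination h
      apply hkeyns _ hw3 hw4
      have : -((agm w).1.1 * (agm w).1.2) = (agm v).1.1 * (agm v).1.2 := by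
        rw [hfst, hneg]; ring
      rw [this]; exact hv4
  have main : ∀ v w : AdmPair F, agm v = agm w ↔ (w.1 = v.1 ∨ w.1 = (v.1.2, v.1.1)) := by
    intro v w
    constructor
    · intro h
      obtain ⟨hv1, hv2, _, _⟩ := hagm v
      obtain ⟨hw1, hw2, _, _⟩ := hagm w
      have hs : v.1.1 + v.1.2 = w.1.1 + w.1.2 := by
        have h' := hv1.symm.trans (h ▸ hw1)
        field_simp [h2] at h'
        linear_combination h'
      have hp : v.1.1 * v.1.2 = w.1.1 * w.1.2 := by
        rw [← hv2, ← hw2, h]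
      have hroot : (w.1.1 - v.1.1) * (w.1.1 - v.1.2) = 0 := by
        linear_combination hp - w.1.1 * hs
      rcases mul_eq_zero.1 hroot with hc | hc
      · left
        have h1 : w.1.1 = v.1.1 := by linear_combination hc
        have h2' : w.1.2 = v.1.2 := by linear_combination -hs - h1
        exact Prod.ext h1 h2'
      · right
        have h1 : w.1.1 = v.1.2 := by linear_combination hc
        have h2' : w.1.2 = v.1.1 := by linear_combination -hs - h1
        exact Prod.ext h1 h2'
    · rintro (h | h)
      · exact congrArg agm (Subtype.ext h.symm)
      · refine (key v w ?_ ?_)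
        · rw [h]; exact add_comm _ _
        · rw [h]; exact mul_comm _ _
  refine ⟨main, ?_⟩
  intro u hu
  obtain ⟨v, hv⟩ := hu
  obtain ⟨ha, hb, hab, hanb, hsq⟩ := v.2
  have hswap : IsAdmissible v.1.2 v.1.1 :=
    ⟨hb, ha, fun h => hab h.symm, fun h => hanb (by rw [h]; ring), by rw [mul_comm]; exact hsq⟩
  set sv : AdmPair F := ⟨(v.1.2, v.1.1), hswap⟩ with hsv
  have hset : {w : AdmPair F | agm w = u} = {v, sv} := by
    ext w
    simp only [Set.mem_setOf_eq, Set.mem_insert_iff, Set.mem_singleton_iff]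
    constructor
    · intro h
      have := (main v w).1 (hv.trans h.symm)
      rcases this with h' | h'
      · left; exact Subtype.ext h'
      · right; exact Subtype.ext h'
    · rintro (h | h)
      · rw [h, hv]
      · rw [h, ← hv]
        exact ((main v sv).2 (Or.inr rfl)).symm
  rw [hset]
  refine Set.ncard_pair ?_
  intro h
  exact hab (congrArg (fun z => z.1.1) h)
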